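/- arXiv:2201.12273 — 2 statements merged into one kernel-verified Lean document; each statement's English description precedes it below -/
import Mathlib

section
/- Let G be a graph, c edge costs, and habitats H₁,…,H_r each inducing a cycle, with habitat hypergraph B (edge weights w_B = c ∘ f⁻¹). Then F ⊆ E(G) is a minimum-cost edge set with G[F][H_i] connected and H_i ⊆ V(G[F]) for all i, if and only if E(B) \ f(F) is a maximum-weight matching in B. In particular, the minimum cost equals c(E(G)) minus the maximum weight of a matching in B. -/
open SimpleGraph
open scoped Classical

def SatisfiesHab {V : Type*} (F : Set (Sym2 V)) (H : Set V) : Prop :=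
  (∀ v ∈ H, ∃ e ∈ F, v ∈ e) ∧ ((SimpleGraph.fromEdgeSet F).induce H).Connected

def edgesIn {V : Type*} (G : SimpleGraph V) (H : Set V) : Set (Sym2 V) :=
  {e | e ∈ G.edgeSet ∧ ∀ v ∈ e, v ∈ H}

def IsCycleGraph {W : Type*} (G : SimpleGraph W) : Prop :=
  G.Connected ∧ ∀ v, (G.neighborSet v).ncard = 2

/-- The hyperedge of the habitat hypergraph associated with an edge `e` of `G`. -/
def hyperOf {V : Type*} (G : SimpleGraph V) {r : ℕ} (Hs : Fin r → Set V)
    (e : Sym2 V) : Set (Fin r) :=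
  {i | e ∈ edgesIn G (Hs i)}

set_option linter.unusedSectionVars false

section Helpers

variable {W : Type*} [Fintype W]

lemma degree_eq_ncard (K : SimpleGraph W) (v : W) [Fintype (K.neighborSet v)] : K.degree v = (K.neighborSet v).ncard := by
  rw [← card_neighborSet_eq_degree, Set.ncard_eq_toFinset_card', Set.toFinset_card]

lemma reach_of_walk {G : SimpleGraph W} {u v : W}
    (huv : (G.deleteEdges {s(u,v)}).Reachable u v) {x y : W} (p : G.Walk x y) :
    (G.deleteEdges {s(u,v)}).Reachable x y := by
  induction p with
  | nil => exact Reachable.refl _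
  | cons h q ih =>
    rename_i a b c
    refine Reachable.trans ?_ ih
    by_cases he : s(a, b) = s(u, v)
    · rw [Sym2.eq_iff] at he
      rcases he with ⟨rfl, rfl⟩ | ⟨rfl, rfl⟩
      · exact huv
      · exact huv.symm
    · exact (SimpleGraph.deleteEdges_adj.mpr ⟨h, he⟩).reachable

lemma conn_card_le : ∀ (n : ℕ) (G : SimpleGraph W), G.edgeFinset.card = n → G.Connected →
    Fintype.card W ≤ n + 1 := by
  intro n
  induction n using Nat.strong_induction_on with
  | _ n ih =>
    intro G hn hc
    by_cases hac : G.IsAcyclic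
    · have ht : G.IsTree := ⟨hc, hac⟩
      have h1 := ht.card_edgeFinset
      have h2 : 1 ≤ Fintype.card W := Fintype.card_pos_iff.mpr hc.nonempty
      omega
    · rw [isAcyclic_iff_forall_adj_isBridge] at hac
      push_neg at hac
      obtain ⟨u, v, hadj, hbr⟩ := hac
      have hre : (G.deleteEdges {s(u,v)}).Reachable u v := by
        by_contra h
        exact hbr (isBridge_iff.mpr h)
      set G' := G.deleteEdges {s(u,v)} with hG'
      have hc' : G'.Connected := by
        have := hc.nonempty
        exact ⟨fun x y => reach_of_walk hre (hc.preconnected x y).some⟩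
      have hsub : G'.edgeFinset ⊆ G.edgeFinset := by
        intro e he
        rw [mem_edgeFinset] at he ⊢
        rw [hG', edgeSet_deleteEdges] at he
        exact he.1
      have hmem : s(u,v) ∈ G.edgeFinset := mem_edgeFinset.mpr hadj
      have hnmem : s(u,v) ∉ G'.edgeFinset := by
        rw [mem_edgeFinset, hG', edgeSet_deleteEdges]
        simp
      have hlt : G'.edgeFinset.card < n := by
        rw [← hn]
        exact Finset.card_lt_card ⟨hsub, fun hcon => hnmem (hcon hmem)⟩
      have := ih _ hlt G' (by convert rfl) hc'
      omega

lemma cycle_card_edgeFinset (G : SimpleGraph W) (h : (G.Connected ∧ ∀ v, (G.neighborSet v).ncard = 2)) :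
    G.edgeFinset.card = Fintype.card W := by
  have hs := G.sum_degrees_eq_twice_card_edges
  have hdeg : ∀ v ∈ Finset.univ, G.degree v = 2 := fun v _ => by
    rw [degree_eq_ncard]; exact h.2 v
  rw [Finset.sum_congr rfl hdeg, Finset.sum_const, Finset.card_univ, smul_eq_mul] at hs
  omega

lemma degree_induce_of_closed (K : SimpleGraph W) (S : Set W)
    (hS : ∀ ⦃x y : W⦄, x ∈ S → K.Adj x y → y ∈ S) (x : ↥S) :
    (K.induce S).degree x = K.degree x.1 := by
  rw [degree_eq_ncard, degree_eq_ncard]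
  have himg : Subtype.val '' ((K.induce S).neighborSet x) = K.neighborSet x.1 := by
    ext y
    simp only [Set.mem_image, mem_neighborSet, comap_adj, Function.Embedding.coe_subtype]
    constructor
    · rintro ⟨⟨y', hy'⟩, hadj, rfl⟩
      exact hadj
    · intro hadj
      exact ⟨⟨y, hS x.2 hadj⟩, hadj, rfl⟩
  rw [← himg, Set.ncard_image_of_injective _ Subtype.val_injective]


lemma reach_cases {G : SimpleGraph W} (u v : W) {x y : W} (p : G.Walk x y)
    (hy : (G.deleteEdges {s(u,v)}).Reachable y u ∨ (G.deleteEdges {s(u,v)}).Reachable y v) :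
    (G.deleteEdges {s(u,v)}).Reachable x u ∨ (G.deleteEdges {s(u,v)}).Reachable x v := by
  induction p with
  | nil => exact hy
  | cons hadj q ih =>
    rename_i a b c
    have h' := ih hy
    by_cases he : s(a,b) = s(u,v)
    · rw [Sym2.eq_iff] at he
      rcases he with ⟨rfl, rfl⟩ | ⟨rfl, rfl⟩
      · exact Or.inl (Reachable.refl _)
      · exact Or.inr (Reachable.refl _)
    · have hA : (G.deleteEdges {s(u,v)}).Adj a b := deleteEdges_adj.mpr ⟨hadj, by simp only [Set.mem_singleton_iff]; exact he⟩
      rcases h' with h'|h'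
      · exact Or.inl (hA.reachable.trans h')
      · exact Or.inr (hA.reachable.trans h')

lemma cycle_deleteEdge_connected (G : SimpleGraph W)
    (h : G.Connected ∧ ∀ v, (G.neighborSet v).ncard = 2) {e : Sym2 W}
    (he : e ∈ G.edgeSet) : (G.deleteEdges {e}).Connected := by
  revert he
  induction e using Sym2.ind with
  | _ u v =>
  intro he
  have hadj : G.Adj u v := he
  set G' := G.deleteEdges {s(u,v)} with hG'
  have hNE : Nonempty W := h.1.nonempty
  suffices hru : G'.Reachable u v by
    constructor
    intro x y
    have hx := reach_cases u v ((h.1.preconnected x u).some) (Or.inl (Reachable.refl _))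
    have hy := reach_cases u v ((h.1.preconnected y u).some) (Or.inl (Reachable.refl _))
    have hx' : G'.Reachable x u := by
      rcases hx with h'|h'
      · exact h'
      · exact h'.trans hru.symm
    have hy' : G'.Reachable y u := by
      rcases hy with h'|h'
      · exact h'
      · exact h'.trans hru.symm
    exact hx'.trans hy'.symm
  by_contra hnr
  set S : Set W := {x | G'.Reachable u x} with hSdef
  have huS : u ∈ S := Reachable.refl _
  have hvS : v ∉ S := fun hv => hnr hv
  have hclosed : ∀ ⦃x y : W⦄, x ∈ S → G'.Adj x y → y ∈ S :=
    fun x y hx ha => Reachable.trans hx ha.reachable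
  have hdeg : ∀ x ∈ S, G'.degree x = if x = u then 1 else 2 := by
    intro x hx
    rw [degree_eq_ncard]
    by_cases hxu : x = u
    · subst hxu
      rw [if_pos rfl]
      have hns : G'.neighborSet x = G.neighborSet x \ {v} := by
        ext y
        simp only [mem_neighborSet, hG', deleteEdges_adj, Set.mem_singleton_iff,
          Set.mem_diff]
        constructor
        · rintro ⟨ha, hne⟩
          exact ⟨ha, fun hyv => hne (by rw [hyv])⟩
        · rintro ⟨ha, hne⟩
          exact ⟨ha, fun hs => hne (Sym2.congr_right.mp hs)⟩
      rw [hns, Set.ncard_diff_singleton_of_mem ((G.mem_neighborSet x v).mpr hadj), h.2 x]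
    · have hxv : x ≠ v := fun h' => hvS (h' ▸ hx)
      rw [if_neg hxu]
      have hns : G'.neighborSet x = G.neighborSet x := by
        ext y
        simp only [mem_neighborSet, hG', deleteEdges_adj, Set.mem_singleton_iff]
        refine ⟨fun ha => ha.1, fun ha => ⟨ha, fun hs => ?_⟩⟩
        rw [Sym2.eq_iff] at hs
        rcases hs with ⟨h1, h2⟩ | ⟨h1, h2⟩
        · exact hxu h1
        · exact hxv h1
      rw [hns, h.2 x]
  clear hnr hSdef hG' hvS he hadj
  clear_value S
  have hhs := (G'.induce S).sum_degrees_eq_twice_card_edges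
  have hdK : ∀ x : ↥S, (G'.induce S).degree x = if x.1 = u then 1 else 2 := fun x =>
    by
    rw [← hdeg x.1 x.2]
    convert degree_induce_of_closed G' S hclosed x
  have hhs2 : ∑ x : ↥S, (if x.1 = u then (1:ℕ) else 2)
      = 2 * (G'.induce S).edgeFinset.card := by
    rw [← hhs]
    exact Finset.sum_congr rfl (fun x _ => (hdK x).symm)
  have hsplit := Finset.add_sum_erase Finset.univ
    (fun x : ↥S => if x.1 = u then (1:ℕ) else 2) (Finset.mem_univ (⟨u, huS⟩ : ↥S))
  have hrest : ∑ x ∈ Finset.univ.erase (⟨u, huS⟩ : ↥S), (if x.1 = u then (1:ℕ) else 2)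
      = 2 * (Finset.univ.erase (⟨u, huS⟩ : ↥S)).card := by
    rw [Finset.sum_congr rfl (fun x hx => if_neg (fun h' =>
      Finset.ne_of_mem_erase hx (Subtype.ext h')))]
    rw [Finset.sum_const, smul_eq_mul, mul_comm]
  have hval : ((fun x : ↥S => if (x:W) = u then (1:ℕ) else 2) ⟨u, huS⟩) = 1 := by simp
  rw [← hsplit, hrest, if_pos rfl] at hhs2
  omega

lemma core_iff {V : Type*} [Fintype V] (G : SimpleGraph V) (H : Set V)
    (hcyc : IsCycleGraph (G.induce H)) (F : Set (Sym2 V)) (hF : F ⊆ G.edgeSet) :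
    SatisfiesHab F H ↔ (edgesIn G H \ F).Subsingleton := by
  set C := G.induce H with hC
  set D := (SimpleGraph.fromEdgeSet F).induce H with hD
  set emap : Sym2 ↥H → Sym2 V := Sym2.map Subtype.val with hemap
  have hinj : Function.Injective emap := Sym2.map.injective Subtype.val_injective
  have ha : ∀ e' : Sym2 ↥H, e' ∈ C.edgeSet ↔ emap e' ∈ edgesIn G H := by
    intro e'
    induction e' using Sym2.ind with
    | _ x y =>
      constructor
      · intro h
        have hadj : G.Adj x.1 y.1 := h
        refine ⟨hadj, ?_⟩
        intro v hv
        rw [hemap, Sym2.map_pair_eq, Sym2.mem_iff] at hv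
        rcases hv with rfl | rfl
        · exact x.2
        · exact y.2
      · rintro ⟨h1, _⟩
        have hadj : G.Adj x.1 y.1 := by
          rw [hemap, Sym2.map_pair_eq, mem_edgeSet] at h1
          exact h1
        exact hadj
  have hcD : ∀ e' : Sym2 ↥H, e' ∈ D.edgeSet ↔ emap e' ∈ F := by
    intro e'
    induction e' using Sym2.ind with
    | _ x y =>
      rw [hemap, Sym2.map_pair_eq]
      constructor
      · intro h
        have hadj : (SimpleGraph.fromEdgeSet F).Adj x.1 y.1 := h
        exact ((fromEdgeSet_adj _).mp hadj).1
      · intro h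
        have hne : x.1 ≠ y.1 := ((mem_edgeSet _).mp (hF h)).ne
        have : (SimpleGraph.fromEdgeSet F).Adj x.1 y.1 := (fromEdgeSet_adj _).mpr ⟨h, hne⟩
        exact this
  have hDC : D.edgeSet ⊆ C.edgeSet := by
    intro e' he'
    induction e' using Sym2.ind with
    | _ x y =>
      have hadj : (SimpleGraph.fromEdgeSet F).Adj x.1 y.1 := he'
      have : G.Adj x.1 y.1 := (mem_edgeSet _).mp (hF ((fromEdgeSet_adj _).mp hadj).1)
      exact this
  have hb : ∀ e ∈ edgesIn G H, ∃ e', emap e' = e := by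
    intro e he
    induction e using Sym2.ind with
    | _ a b =>
      have haH : a ∈ H := he.2 a (Sym2.mem_mk_left a b)
      have hbH : b ∈ H := he.2 b (Sym2.mem_mk_right a b)
      exact ⟨s(⟨a, haH⟩, ⟨b, hbH⟩), by rw [hemap, Sym2.map_pair_eq]⟩
  have hI : edgesIn G H \ F = emap '' (C.edgeSet \ D.edgeSet) := by
    ext e
    constructor
    · rintro ⟨heI, heF⟩
      obtain ⟨e', rfl⟩ := hb e heI
      exact ⟨e', ⟨(ha e').mpr heI, fun hd => heF ((hcD e').mp hd)⟩, rfl⟩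
    · rintro ⟨e', ⟨hc', hd'⟩, rfl⟩
      exact ⟨(ha e').mp hc', fun hf => hd' ((hcD e').mpr hf)⟩
  constructor
  · rintro ⟨hcov, hconn⟩
    rw [hI]
    have hss : (C.edgeSet \ D.edgeSet).Subsingleton := by
      by_contra hns
      rw [Set.not_subsingleton_iff] at hns
      obtain ⟨e₁, he₁, e₂, he₂, hne⟩ := hns
      have hn := conn_card_le (D.edgeFinset.card) D (by convert rfl) hconn
      have hcC : C.edgeFinset.card = Fintype.card ↥H := cycle_card_edgeFinset C hcyc
      have hsub : D.edgeFinset ⊆ (C.edgeFinset.erase e₁).erase e₂ := by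
        intro e he
        rw [mem_edgeFinset] at he
        refine Finset.mem_erase.mpr ⟨fun h' => he₂.2 (h' ▸ he), Finset.mem_erase.mpr
          ⟨fun h' => he₁.2 (h' ▸ he), mem_edgeFinset.mpr (hDC he)⟩⟩
      have hcard := Finset.card_le_card hsub
      have hm1 : e₁ ∈ C.edgeFinset := mem_edgeFinset.mpr he₁.1
      have hm2 : e₂ ∈ C.edgeFinset.erase e₁ :=
        Finset.mem_erase.mpr ⟨fun h' => hne h'.symm, mem_edgeFinset.mpr he₂.1⟩
      rw [Finset.card_erase_of_mem hm2, Finset.card_erase_of_mem hm1] at hcard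
      have h2 : 2 ≤ C.edgeFinset.card := by
        have hp : ({e₁, e₂} : Finset (Sym2 ↥H)) ⊆ C.edgeFinset := by
          intro z hz
          rcases Finset.mem_insert.mp hz with rfl | hz
          · exact hm1
          · rw [Finset.mem_singleton] at hz
            exact hz ▸ mem_edgeFinset.mpr he₂.1
        have := Finset.card_le_card hp
        rwa [Finset.card_pair hne] at this
      omega
    exact hss.image _
  · intro hsub
    have hsub' : (C.edgeSet \ D.edgeSet).Subsingleton := by
      intro a ha' b hb'
      apply hinj
      exact hsub (by rw [hI]; exact ⟨a, ha', rfl⟩) (by rw [hI]; exact ⟨b, hb', rfl⟩)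
    have hDeq : D = C.deleteEdges (C.edgeSet \ D.edgeSet) := by
      apply SimpleGraph.edgeSet_injective
      rw [edgeSet_deleteEdges, Set.diff_diff_cancel_left hDC]
    refine ⟨?_, ?_⟩
    · intro v hv
      obtain ⟨w₁, w₂, hw12, hnbr⟩ := Set.ncard_eq_two.mp (hcyc.2 ⟨v, hv⟩)
      set a : ↥H := ⟨v, hv⟩ with hadef
      have hw₁ : C.Adj a w₁ := by
        have : w₁ ∈ C.neighborSet a := by rw [hnbr]; exact Set.mem_insert _ _
        exact this
      have hw₂ : C.Adj a w₂ := by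
        have : w₂ ∈ C.neighborSet a := by rw [hnbr]; exact Set.mem_insert_of_mem _ rfl
        exact this
      have he₁ : s(a, w₁) ∈ C.edgeSet := hw₁
      have he₂ : s(a, w₂) ∈ C.edgeSet := hw₂
      have hne : s(a, w₁) ≠ s(a, w₂) := fun h => hw12 (Sym2.congr_right.mp h)
      by_cases h1 : s(a, w₁) ∈ D.edgeSet
      · exact ⟨emap s(a, w₁), (hcD _).mp h1,
          by rw [hemap, Sym2.map_pair_eq]; exact Sym2.mem_mk_left _ _⟩
      · by_cases h2 : s(a, w₂) ∈ D.edgeSet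
        · exact ⟨emap s(a, w₂), (hcD _).mp h2,
            by rw [hemap, Sym2.map_pair_eq]; exact Sym2.mem_mk_left _ _⟩
        · exact absurd (hsub' ⟨he₁, h1⟩ ⟨he₂, h2⟩) hne
    · rcases hsub'.eq_empty_or_singleton with h0 | ⟨e, he⟩
      · have hDC' : D = C := by rw [hDeq, h0, deleteEdges_empty]
        rw [show ((SimpleGraph.fromEdgeSet F).induce H) = D from rfl, hDC']
        exact hcyc.1
      · have heC : e ∈ C.edgeSet := by
          have : e ∈ C.edgeSet \ D.edgeSet := by rw [he]; exact rfl
          exact this.1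
        have hconn := cycle_deleteEdge_connected C hcyc heC
        rw [show ((SimpleGraph.fromEdgeSet F).induce H) = D from rfl, hDeq, he]
        exact hconn

end Helpers

lemma sum_tf {α β : Type*} [AddCommMonoid β] (s : Set α) {i1 i2 : Fintype ↥s} (f : α → β) :
    @Finset.sum _ _ _ (@Set.toFinset _ s i1) f = @Finset.sum _ _ _ (@Set.toFinset _ s i2) f := by
  rw [Subsingleton.elim i1 i2]

/-- If every habitat induces a cycle, then `F ⊆ E(G)` is a minimum-cost edge set
satisfying all habitats iff `E(G) \ F` is a maximum-weight matching in the habitat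
hypergraph; in particular the minimum cost equals `c(E(G))` minus the maximum weight
of a matching. -/
theorem stmt8 {V : Type*} [Fintype V] (G : SimpleGraph V) (r : ℕ) (Hs : Fin r → Set V)
    (c : Sym2 V → ℕ)
    (hcyc : ∀ i, IsCycleGraph (G.induce (Hs i)))
    (F : Set (Sym2 V)) (hF : F ⊆ G.edgeSet) :
    (((∀ i, SatisfiesHab F (Hs i)) ∧
        ∀ F' : Set (Sym2 V), F' ⊆ G.edgeSet → (∀ i, SatisfiesHab F' (Hs i)) →
          ∑ e ∈ F.toFinset, c e ≤ ∑ e ∈ F'.toFinset, c e) ↔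
      ((∀ e ∈ G.edgeSet \ F, ∀ e' ∈ G.edgeSet \ F, e ≠ e' →
          Disjoint (hyperOf G Hs e) (hyperOf G Hs e')) ∧
        ∀ M : Set (Sym2 V), M ⊆ G.edgeSet →
          (∀ e ∈ M, ∀ e' ∈ M, e ≠ e' → Disjoint (hyperOf G Hs e) (hyperOf G Hs e')) →
          ∑ e ∈ M.toFinset, c e ≤ ∑ e ∈ (G.edgeSet \ F).toFinset, c e)) ∧
    sInf {k : ℕ | ∃ F' : Set (Sym2 V), F' ⊆ G.edgeSet ∧ (∀ i, SatisfiesHab F' (Hs i)) ∧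
        ∑ e ∈ F'.toFinset, c e = k}
      = ∑ e ∈ G.edgeSet.toFinset, c e -
        sSup {k : ℕ | ∃ M : Set (Sym2 V), M ⊆ G.edgeSet ∧
          (∀ e ∈ M, ∀ e' ∈ M, e ≠ e' → Disjoint (hyperOf G Hs e) (hyperOf G Hs e')) ∧
          ∑ e ∈ M.toFinset, c e = k} := by
  have hkey : ∀ F₀ : Set (Sym2 V), F₀ ⊆ G.edgeSet →
      ((∀ i, SatisfiesHab F₀ (Hs i)) ↔
       (∀ e ∈ G.edgeSet \ F₀, ∀ e' ∈ G.edgeSet \ F₀, e ≠ e' →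
          Disjoint (hyperOf G Hs e) (hyperOf G Hs e'))) := by
    intro F₀ hF₀
    constructor
    · intro hs e he e' he' hne
      rw [Set.disjoint_left]
      intro i hi hi'
      have hss := (core_iff G (Hs i) (hcyc i) F₀ hF₀).mp (hs i)
      have hie : e ∈ edgesIn G (Hs i) := hi
      have hie' : e' ∈ edgesIn G (Hs i) := hi'
      exact hne (hss ⟨hie, he.2⟩ ⟨hie', he'.2⟩)
    · intro hm i
      rw [core_iff G (Hs i) (hcyc i) F₀ hF₀]
      intro x hx y hy
      by_contra hxy
      have hx' : x ∈ G.edgeSet \ F₀ := ⟨hx.1.1, hx.2⟩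
      have hy' : y ∈ G.edgeSet \ F₀ := ⟨hy.1.1, hy.2⟩
      have hd := hm x hx' y hy' hxy
      rw [Set.disjoint_left] at hd
      exact hd (show i ∈ hyperOf G Hs x from hx.1) (show i ∈ hyperOf G Hs y from hy.1)
  have hsum : ∀ A : Set (Sym2 V), A ⊆ G.edgeSet →
      ∑ e ∈ G.edgeSet.toFinset, c e
        = ∑ e ∈ A.toFinset, c e + ∑ e ∈ (G.edgeSet \ A).toFinset, c e := by
    intro A hA
    have h := Finset.sum_sdiff (f := c) (Set.toFinset_subset_toFinset.mpr hA)
    rw [Set.toFinset_diff]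
    omega
  have hcompl : ∀ M : Set (Sym2 V), M ⊆ G.edgeSet → G.edgeSet \ (G.edgeSet \ M) = M :=
    fun M hM => Set.diff_diff_cancel_left hM
  constructor
  · constructor
    · rintro ⟨hP, hmin⟩
      refine ⟨(hkey F hF).mp hP, ?_⟩
      intro M hM hQ
      have hP' : ∀ i, SatisfiesHab (G.edgeSet \ M) (Hs i) := by
        apply (hkey _ Set.diff_subset).mpr
        rw [hcompl M hM]
        exact hQ
      have hle := hmin _ Set.diff_subset hP'
      have h1 := hsum F hF
      have h2 := hsum M hM
      simp only [Set.toFinset_diff] at h1 h2 hle ⊢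
      omega
    · rintro ⟨hQ, hmax⟩
      refine ⟨(hkey F hF).mpr hQ, ?_⟩
      intro F' hF' hP'
      have hQ' := (hkey F' hF').mp hP'
      have hle := hmax _ Set.diff_subset hQ'
      have h1 := hsum F hF
      have h2 := hsum F' hF'
      simp only [Set.toFinset_diff] at h1 h2 hle ⊢
      omega
  · set B := {k : ℕ | ∃ M : Set (Sym2 V), M ⊆ G.edgeSet ∧
      (∀ e ∈ M, ∀ e' ∈ M, e ≠ e' → Disjoint (hyperOf G Hs e) (hyperOf G Hs e')) ∧
      ∑ e ∈ M.toFinset, c e = k} with hB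
    have hBne : (0:ℕ) ∈ B := ⟨∅, by simp, by simp, by simp⟩
    have hBbdd : BddAbove B := by
      refine ⟨∑ e ∈ G.edgeSet.toFinset, c e, ?_⟩
      rintro k ⟨M, hMsub, _, rfl⟩
      exact Finset.sum_le_sum_of_subset (Set.toFinset_subset_toFinset.mpr hMsub)
    have hsmem : sSup B ∈ B := Nat.sSup_mem ⟨0, hBne⟩ hBbdd
    obtain ⟨M₀, hM₀sub, hM₀m, hM₀sum⟩ := hsmem
    have hP₀ : ∀ i, SatisfiesHab (G.edgeSet \ M₀) (Hs i) := by
      apply (hkey _ Set.diff_subset).mpr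
      rw [hcompl M₀ hM₀sub]
      exact hM₀m
    have hsum₀ := hsum M₀ hM₀sub
    simp only [Set.toFinset_diff] at hsum₀
    have hAmem : (∑ e ∈ G.edgeSet.toFinset, c e) - sSup B ∈
        {k : ℕ | ∃ F' : Set (Sym2 V), F' ⊆ G.edgeSet ∧ (∀ i, SatisfiesHab F' (Hs i)) ∧
          ∑ e ∈ F'.toFinset, c e = k} :=
      ⟨G.edgeSet \ M₀, Set.diff_subset, hP₀, by
        simp only [Set.toFinset_diff]
        omega⟩
    apply le_antisymm
    · exact Nat.sInf_le hAmem
    · apply le_csInf ⟨_, hAmem⟩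
      rintro k ⟨F', hF', hP', rfl⟩
      have hQ' := (hkey F' hF').mp hP'
      have hmem : (∑ e ∈ (G.edgeSet \ F').toFinset, c e) ∈ B :=
        ⟨_, Set.diff_subset, hQ', sum_tf _ c⟩
      have hle := le_csSup hBbdd hmem
      have h2 := hsum F' hF'
      simp only [Set.toFinset_diff] at h2 hle ⊢
      omega
end

section
/- Let G be a graph with edge costs c, and let F₁,…,F_r be edge sets where F_i satisfies habitat H_i (which induces a cycle), each F_i obtained by taking all but one edge of the cycle G[H_i]. Let F* = ⋃ F*_i be any optimal solution with F*_i ⊆ E(G[H_i]) satisfying H_i. Then c(⋃_{i=1}^r F_i) ≤ c(F*) + r · c_max, where c_max = max_{e∈E} c(e). -/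
open SimpleGraph
open scoped Classical

lemma exists_pred {W : Type*} (G : SimpleGraph W) (hc : G.Connected) (root v : W) (hv : v ≠ root) :
    ∃ u, G.Adj u v ∧ G.dist root u + 1 = G.dist root v := by
  obtain ⟨q, hq⟩ := (hc v root).exists_walk_length_eq_dist
  match q with
  | SimpleGraph.Walk.nil => exact absurd rfl hv
  | SimpleGraph.Walk.cons (v := u) h q' =>
    refine ⟨u, h.symm, ?_⟩
    have h1 : G.dist root u ≤ q'.reverse.length := SimpleGraph.dist_le _
    have h2 : G.dist root v ≤ G.dist root u + 1 := by
      calc G.dist root v ≤ G.dist root u + G.dist u v := hc.dist_triangle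
        _ ≤ G.dist root u + 1 := by
            have := (SimpleGraph.dist_eq_one_iff_adj (G := G)).2 h.symm
            omega
    have h3 : G.dist root v = q'.length + 1 := by
      rw [SimpleGraph.dist_comm]
      simpa using hq.symm
    simp only [SimpleGraph.Walk.length_reverse] at h1
    omega

lemma conn_card_le_s11 {W : Type*} [Fintype W] (G : SimpleGraph W) (hc : G.Connected) :
    Fintype.card W ≤ G.edgeSet.ncard + 1 := by
  obtain ⟨root⟩ := hc.nonempty
  have key : ∀ v : {v : W // v ≠ root}, ∃ e ∈ G.edgeSet,
      ∃ u, G.Adj u v.1 ∧ G.dist root u + 1 = G.dist root v.1 ∧ e = s(u, v.1) := by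
    rintro ⟨v, hv⟩
    obtain ⟨u, hu, hd⟩ := exists_pred G hc root v hv
    exact ⟨s(u, v), hu, u, hu, hd, rfl⟩
  choose f hf hfs using key
  have hinj : Function.Injective f := by
    intro v w hvw
    obtain ⟨u1, ha1, hd1, he1⟩ := hfs v
    obtain ⟨u2, ha2, hd2, he2⟩ := hfs w
    rw [he1, he2] at hvw
    rw [Sym2.eq_iff] at hvw
    rcases hvw with ⟨h1, h2⟩ | ⟨h1, h2⟩
    · exact Subtype.ext h2
    · rw [h1] at hd1; rw [← h2] at hd2; omega
  have : Nat.card {v : W // v ≠ root} ≤ Nat.card G.edgeSet := by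
    apply Nat.card_le_card_of_injective (fun v => ⟨f v, hf v⟩)
    intro a b hab
    exact hinj (Subtype.ext_iff.mp hab)
  rw [Nat.card_eq_fintype_card, Nat.card_coe_set_eq] at this
  have hcard : Fintype.card {v : W // v ≠ root} = Fintype.card W - 1 := by
    simp [Fintype.card_subtype_compl (p := fun v => v = root)]
  have hpos : 0 < Fintype.card W := Fintype.card_pos_iff.mpr ⟨root⟩
  omega

lemma cycle_edge_card {W : Type*} [Fintype W] (G : SimpleGraph W)
    (h : IsCycleGraph G) : G.edgeSet.ncard = Fintype.card W := by
  have hd : ∀ v, G.degree v = 2 := by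
    intro v
    rw [← SimpleGraph.card_neighborSet_eq_degree, ← Nat.card_eq_fintype_card,
      Nat.card_coe_set_eq]
    exact h.2 v
  have h2 := SimpleGraph.sum_degrees_eq_twice_card_edges G
  simp only [hd, Finset.sum_const, Finset.card_univ, smul_eq_mul] at h2
  have h3 : G.edgeSet.ncard = G.edgeFinset.card := by
    rw [Set.ncard_eq_toFinset_card']
    congr 1
  omega

lemma map_edgeSet_fromEdgeSet {V : Type*} (G : SimpleGraph V) (H : Set V)
    (S : Set (Sym2 V)) (hS : S ⊆ edgesIn G H) :
    Sym2.map (Subtype.val : H → V) '' ((SimpleGraph.fromEdgeSet S).induce H).edgeSet = S := by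
  ext e
  constructor
  · rintro ⟨e', he', rfl⟩
    induction e' using Sym2.ind with
    | _ a b =>
      simp only [SimpleGraph.mem_edgeSet, SimpleGraph.comap_adj,
        Function.Embedding.coe_subtype, SimpleGraph.fromEdgeSet_adj] at he'
      simpa using he'.1
  · intro he
    obtain ⟨hG, hmem⟩ := hS he
    induction e using Sym2.ind with
    | _ a b =>
      have ha : a ∈ H := hmem a (by simp)
      have hb : b ∈ H := hmem b (by simp)
      have hne : a ≠ b := (G.mem_edgeSet.mp hG).ne
      refine ⟨s(⟨a, ha⟩, ⟨b, hb⟩), ?_, by simp⟩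
      simp only [SimpleGraph.mem_edgeSet, SimpleGraph.comap_adj,
        Function.Embedding.coe_subtype, SimpleGraph.fromEdgeSet_adj]
      exact ⟨he, hne⟩

lemma map_edgeSet_induce {V : Type*} (G : SimpleGraph V) (H : Set V) :
    Sym2.map (Subtype.val : H → V) '' (G.induce H).edgeSet = edgesIn G H := by
  ext e
  constructor
  · rintro ⟨e', he', rfl⟩
    induction e' using Sym2.ind with
    | _ a b =>
      simp only [SimpleGraph.mem_edgeSet, SimpleGraph.comap_adj,
        Function.Embedding.coe_subtype] at he'
      refine ⟨he', ?_⟩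
      intro v hv
      simp only [Sym2.map_pair_eq, Sym2.mem_iff] at hv
      rcases hv with rfl | rfl
      · exact a.2
      · exact b.2
  · rintro ⟨hG, hmem⟩
    induction e using Sym2.ind with
    | _ a b =>
      have ha : a ∈ H := hmem a (by simp)
      have hb : b ∈ H := hmem b (by simp)
      exact ⟨s(⟨a, ha⟩, ⟨b, hb⟩), by simpa using hG, by simp⟩

lemma ncard_map_eq {V : Type*} (H : Set V) (T : Set (Sym2 ↥H)) :
    (Sym2.map (Subtype.val : H → V) '' T).ncard = T.ncard :=
  Set.ncard_image_of_injective _ (Sym2.map.injective Subtype.val_injective)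

lemma nat_sum_union_le {α : Type*} [DecidableEq α] (s t : Finset α) (f : α → ℕ) :
    ∑ a ∈ s ∪ t, f a ≤ ∑ a ∈ s, f a + ∑ a ∈ t, f a := by
  rw [← Finset.union_sdiff_self_eq_union, Finset.sum_union Finset.disjoint_sdiff]
  exact Nat.add_le_add_left (Finset.sum_le_sum_of_subset Finset.sdiff_subset) _

lemma nat_sum_biUnion_le {ι α : Type*} [DecidableEq α] (s : Finset ι) (t : ι → Finset α)
    (f : α → ℕ) : ∑ a ∈ s.biUnion t, f a ≤ ∑ i ∈ s, ∑ a ∈ t i, f a := by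
  classical
  induction s using Finset.induction with
  | empty => simp
  | insert _ _ h ih =>
    rw [Finset.biUnion_insert, Finset.sum_insert h]
    exact le_trans (nat_sum_union_le _ _ _) (Nat.add_le_add_left ih _)

lemma missing_le_one {V : Type*} [Fintype V] (G : SimpleGraph V) (H : Set V)
    (hcyc : IsCycleGraph (G.induce H)) (S : Set (Sym2 V)) (hS : S ⊆ edgesIn G H)
    (hconn : ((SimpleGraph.fromEdgeSet S).induce H).Connected) :
    (edgesIn G H \ S).ncard ≤ 1 := by
  have hE : (edgesIn G H).ncard = Fintype.card ↥H := by
    rw [← map_edgeSet_induce G H, ncard_map_eq, cycle_edge_card _ hcyc]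
  have hSn : Fintype.card ↥H ≤ S.ncard + 1 := by
    have := conn_card_le_s11 _ hconn
    rwa [← ncard_map_eq H ((SimpleGraph.fromEdgeSet S).induce H).edgeSet,
      map_edgeSet_fromEdgeSet G H S hS] at this
  have hfin : (edgesIn G H).Finite := Set.toFinite _
  have hdiff := Set.ncard_diff hS (Set.toFinite S)
  have hle : S.ncard ≤ (edgesIn G H).ncard := Set.ncard_le_ncard hS hfin
  omega


theorem stmt11' {V : Type*} [Fintype V] (G : SimpleGraph V) (c : Sym2 V → ℕ)
    (r : ℕ) (Hs : Fin r → Set V)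
    (hcyc : ∀ i, IsCycleGraph (G.induce (Hs i)))
    (F Fs : Fin r → Set (Sym2 V))
    (hFsub : ∀ i, F i ⊆ edgesIn G (Hs i))
    (hFone : ∀ i, (edgesIn G (Hs i) \ F i).ncard ≤ 1)
    (hFssub : ∀ i, Fs i ⊆ edgesIn G (Hs i))
    (hFssat : ∀ i, ((SimpleGraph.fromEdgeSet (Fs i)).induce (Hs i)).Connected) :
    ∑ e ∈ (⋃ i, F i).toFinset, c e ≤
      ∑ e ∈ (⋃ i, Fs i).toFinset, c e + r * G.edgeSet.toFinset.sup c := by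
  classical
  set cmax := G.edgeSet.toFinset.sup c with hcmax
  have hD : ∀ i, (F i \ Fs i).ncard ≤ 1 := by
    intro i
    have h1 := missing_le_one G (Hs i) (hcyc i) (Fs i) (hFssub i) (hFssat i)
    have h2 : F i \ Fs i ⊆ edgesIn G (Hs i) \ Fs i := fun e he => ⟨hFsub i he.1, he.2⟩
    exact le_trans (Set.ncard_le_ncard h2 (Set.toFinite _)) h1
  have hsub : (⋃ i, F i).toFinset ⊆
      (⋃ i, Fs i).toFinset ∪ Finset.univ.biUnion (fun i => (F i \ Fs i).toFinset) := by
    intro e he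
    simp only [Set.mem_toFinset, Set.mem_iUnion] at he
    obtain ⟨i, hi⟩ := he
    by_cases h : e ∈ ⋃ j, Fs j
    · exact Finset.mem_union_left _ (by simpa using h)
    · refine Finset.mem_union_right _ ?_
      simp only [Finset.mem_biUnion, Finset.mem_univ, Set.mem_toFinset]
      exact ⟨i, trivial, hi, fun hc => h (Set.mem_iUnion.mpr ⟨i, hc⟩)⟩
  have hinner : ∀ i, ∑ e ∈ (F i \ Fs i).toFinset, c e ≤ cmax := by
    intro i
    have hcard : (F i \ Fs i).toFinset.card ≤ 1 := by
      rw [← Set.ncard_eq_toFinset_card']; exact hD i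
    have hbound : ∀ e ∈ (F i \ Fs i).toFinset, c e ≤ cmax := by
      intro e he
      apply Finset.le_sup
      rw [Set.mem_toFinset] at he ⊢
      exact (hFsub i he.1).1
    calc ∑ e ∈ (F i \ Fs i).toFinset, c e ≤ (F i \ Fs i).toFinset.card • cmax :=
          Finset.sum_le_card_nsmul _ _ _ hbound
      _ ≤ cmax := by
          rw [smul_eq_mul]
          calc (F i \ Fs i).toFinset.card * cmax ≤ 1 * cmax := Nat.mul_le_mul_right _ hcard
            _ = cmax := one_mul _
  calc ∑ e ∈ (⋃ i, F i).toFinset, c e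
      ≤ ∑ e ∈ (⋃ i, Fs i).toFinset ∪ Finset.univ.biUnion (fun i => (F i \ Fs i).toFinset), c e :=
        Finset.sum_le_sum_of_subset hsub
    _ ≤ ∑ e ∈ (⋃ i, Fs i).toFinset, c e
        + ∑ e ∈ Finset.univ.biUnion (fun i => (F i \ Fs i).toFinset), c e :=
        nat_sum_union_le _ _ _
    _ ≤ ∑ e ∈ (⋃ i, Fs i).toFinset, c e + ∑ i : Fin r, ∑ e ∈ (F i \ Fs i).toFinset, c e :=
        Nat.add_le_add_left (nat_sum_biUnion_le _ _ _) _
    _ ≤ ∑ e ∈ (⋃ i, Fs i).toFinset, c e + ∑ _i : Fin r, cmax :=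
        Nat.add_le_add_left (Finset.sum_le_sum fun i _ => hinner i) _
    _ = ∑ e ∈ (⋃ i, Fs i).toFinset, c e + r * cmax := by
        simp [Finset.sum_const, mul_comm]

/-- Additive approximation guarantee: if each `F i` satisfies the cycle habitat `Hs i`
by taking all but at most one edge of the cycle `G[Hs i]`, and `Fs i ⊆ E(G[Hs i])`
also satisfies `Hs i` (e.g. pieces of an optimal solution), then
`c(⋃ F i) ≤ c(⋃ Fs i) + r · c_max` where `c_max = max_{e ∈ E} c(e)`. -/
theorem stmt11 {V : Type*} [Fintype V] (G : SimpleGraph V) (c : Sym2 V → ℕ)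
    (r : ℕ) (Hs : Fin r → Set V)
    (hcyc : ∀ i, IsCycleGraph (G.induce (Hs i)))
    (F Fs : Fin r → Set (Sym2 V))
    (hFsub : ∀ i, F i ⊆ edgesIn G (Hs i))
    (hFone : ∀ i, (edgesIn G (Hs i) \ F i).ncard ≤ 1)
    (hFsat : ∀ i, SatisfiesHab (F i) (Hs i))
    (hFssub : ∀ i, Fs i ⊆ edgesIn G (Hs i))
    (hFssat : ∀ i, SatisfiesHab (Fs i) (Hs i)) :
    ∑ e ∈ (⋃ i, F i).toFinset, c e ≤
      ∑ e ∈ (⋃ i, Fs i).toFinset, c e + r * G.edgeSet.toFinset.sup c := by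
  exact stmt11' G c r Hs hcyc F Fs hFsub hFone hFssub (fun i => (hFssat i).2)
end
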